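/- For every real λ and every integer n ≥ 0, in ℝ⟦X⟧ one has D_{p,q}^n (e_{p,q}(λX)) = λ^n p^{n(n−1)/2} e_{p,q}(λ p^n X) and D_{p,q}^n (E_{p,q}(λX)) = λ^n q^{n(n−1)/2} E_{p,q}(λ q^n X), where e_{p,q}(λX) = ∑_{m≥0} p^{m(m−1)/2} λ^m X^m/[m]_{p,q}! and E_{p,q}(λX) = ∑_{m≥0} q^{m(m−1)/2} λ^m X^m/[m]_{p,q}!. -/

import Mathlib

noncomputable section
open Finset Polynomial

/-- The (p,q)-number `[n]_{p,q} = (p^n - q^n)/(p - q)`. -/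
def pqNum (p q : ℝ) (n : ℕ) : ℝ := (p ^ n - q ^ n) / (p - q)

/-- The (p,q)-factorial `[n]_{p,q}! = ∏_{k=1}^n [k]_{p,q}`. -/
def pqFact (p q : ℝ) (n : ℕ) : ℝ := ∏ k ∈ Finset.Icc 1 n, pqNum p q k

/-- The (p,q)-binomial coefficient. -/
def pqBinom (p q : ℝ) (n k : ℕ) : ℝ := pqFact p q n / (pqFact p q k * pqFact p q (n - k))

/-- The (p,q)-derivative on polynomials: the linear operator with `D(X^n) = [n]_{p,q} X^(n-1)`. -/
def pqDeriv (p q : ℝ) (f : Polynomial ℝ) : Polynomial ℝ :=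
  f.sum fun n a => Polynomial.C (a * pqNum p q n) * Polynomial.X ^ (n - 1)

/-- The (p,q)-derivative on formal power series, acting coefficientwise by
`D(X^n) = [n]_{p,q} X^(n-1)`. -/
def pqDerivPS (p q : ℝ) (f : PowerSeries ℝ) : PowerSeries ℝ :=
  PowerSeries.mk fun n => pqNum p q (n + 1) * PowerSeries.coeff (n + 1) f

/-- The double (p,q)-factorial `[2m]_{p,q}!! = ∏_{k=1}^m [2k]_{p,q}`. -/
def pqDoubleFact (p q : ℝ) (m : ℕ) : ℝ := ∏ k ∈ Finset.Icc 1 m, pqNum p q (2 * k)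

/-- A sequence of real polynomials of exact degree `n` is (p,q)-Appell when
`D_{p,q} f_{n+1}(x) = [n+1]_{p,q} f_n(p x)` for all `n ≥ 0` and all `x`. -/
def IsPQAppell (p q : ℝ) (f : ℕ → Polynomial ℝ) : Prop :=
  (∀ n, (f n).natDegree = n) ∧
    ∀ (n : ℕ) (x : ℝ), (pqDeriv p q (f (n + 1))).eval x = pqNum p q (n + 1) * (f n).eval (p * x)


lemma pqNum_pos (p q : ℝ) (hq : 0 < q) (hpq : q < p) {k : ℕ} (hk : k ≠ 0) :
    0 < pqNum p q k := by
  have h1 : q ^ k < p ^ k := pow_lt_pow_left₀ hpq hq.le hk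
  exact div_pos (by linarith) (by linarith)

lemma pqFact_pos (p q : ℝ) (hq : 0 < q) (hpq : q < p) (n : ℕ) : 0 < pqFact p q n := by
  refine Finset.prod_pos fun k hk => pqNum_pos p q hq hpq ?_
  simp only [Finset.mem_Icc] at hk; omega

lemma tri_succ (m : ℕ) : (m + 1) * m / 2 = m * (m - 1) / 2 + m := by
  have h : (m + 1) * m = m * (m - 1) + m * 2 := by cases m with
    | zero => rfl
    | succ k => simp only [Nat.add_sub_cancel]; ring
  rw [h, Nat.add_mul_div_right _ _ (by norm_num : 0 < 2)]

lemma pqDerivPS_C_mul (p q a : ℝ) (f : PowerSeries ℝ) :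
    pqDerivPS p q (PowerSeries.C a * f) = PowerSeries.C a * pqDerivPS p q f := by
  ext m
  simp [pqDerivPS, mul_left_comm]

lemma pq_step (p q : ℝ) (hq : 0 < q) (hpq : q < p) (r u : ℝ) :
    pqDerivPS p q (PowerSeries.mk fun m => r ^ (m * (m - 1) / 2) * u ^ m / pqFact p q m)
      = PowerSeries.C u *
          PowerSeries.mk (fun m => r ^ (m * (m - 1) / 2) * (u * r) ^ m / pqFact p q m) := by
  ext m
  have hN : pqNum p q (m + 1) ≠ 0 := (pqNum_pos p q hq hpq (Nat.succ_ne_zero m)).ne'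
  have hF : pqFact p q m ≠ 0 := (pqFact_pos p q hq hpq m).ne'
  have hFs : pqFact p q (m + 1) = pqFact p q m * pqNum p q (m + 1) := by
    rw [pqFact, Finset.prod_Icc_succ_top (by omega : 1 ≤ m + 1)]; rfl
  simp only [pqDerivPS, PowerSeries.coeff_mk, PowerSeries.coeff_C_mul]
  rw [hFs]
  have he : (m + 1) * (m + 1 - 1) / 2 = m * (m - 1) / 2 + m := by
    simpa using tri_succ m
  rw [he, pow_add, pow_succ, mul_pow]
  field_simp

/-- the n-th (p,q)-derivative of the (p,q)-exponential power series. -/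
theorem pq_exponential_nth_deriv (p q : ℝ) (hq : 0 < q) (hpq : q < p) (l : ℝ) (n : ℕ) :
    (pqDerivPS p q)^[n]
          (PowerSeries.mk fun m => p ^ (m * (m - 1) / 2) * l ^ m / pqFact p q m)
        = PowerSeries.C (l ^ n * p ^ (n * (n - 1) / 2)) *
            PowerSeries.mk (fun m => p ^ (m * (m - 1) / 2) * (l * p ^ n) ^ m / pqFact p q m) ∧
      (pqDerivPS p q)^[n]
          (PowerSeries.mk fun m => q ^ (m * (m - 1) / 2) * l ^ m / pqFact p q m)
        = PowerSeries.C (l ^ n * q ^ (n * (n - 1) / 2)) *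
            PowerSeries.mk (fun m => q ^ (m * (m - 1) / 2) * (l * q ^ n) ^ m / pqFact p q m) := by
  induction n with
  | zero => constructor <;> · ext m; simp
  | succ n ih =>
    obtain ⟨ih1, ih2⟩ := ih
    have key : ∀ r : ℝ, (pqDerivPS p q)^[n]
          (PowerSeries.mk fun m => r ^ (m * (m - 1) / 2) * l ^ m / pqFact p q m)
        = PowerSeries.C (l ^ n * r ^ (n * (n - 1) / 2)) *
            PowerSeries.mk (fun m => r ^ (m * (m - 1) / 2) * (l * r ^ n) ^ m / pqFact p q m) →
        (pqDerivPS p q)^[n + 1]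
          (PowerSeries.mk fun m => r ^ (m * (m - 1) / 2) * l ^ m / pqFact p q m)
        = PowerSeries.C (l ^ (n + 1) * r ^ ((n + 1) * n / 2)) *
            PowerSeries.mk
              (fun m => r ^ (m * (m - 1) / 2) * (l * r ^ (n + 1)) ^ m / pqFact p q m) := by
      intro r h
      rw [Function.iterate_succ_apply', h, pqDerivPS_C_mul,
        pq_step p q hq hpq r (l * r ^ n), ← mul_assoc, ← map_mul, tri_succ n]
      congr 2
      · rw [pow_add, pow_succ]; ring
      · funext m; rw [pow_succ, ← mul_assoc]
    constructor
    · simpa using key p ih1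
    · simpa using key q ih2
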